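/- For any n-regular graph G with κ(G) ≥ 3, λ'(G®C_n) = min{λ(G), 4}, where C_n is the cycle on n vertices. -/

import Mathlib

open SimpleGraph

section Defs

variable {V : Type*}

/-- The set of edges of `G` with one endpoint in `X` and the other outside `X`. -/
def edgeBoundary (G : SimpleGraph V) (X : Set V) : Set (Sym2 V) :=
  {e | e ∈ G.edgeSet ∧ ∃ u ∈ X, ∃ v ∈ Xᶜ, e = s(u, v)}

/-- The edge-connectivity `λ(G)`: the minimum number of edges whose removal disconnects `G`. -/
noncomputable def edgeConn (G : SimpleGraph V) : ℕ :=
  sInf {k | ∃ F : Set (Sym2 V), F ⊆ G.edgeSet ∧ F.ncard = k ∧ ¬(G.deleteEdges F).Connected}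

/-- `F` is a restricted edge-cut of `G`: removing `F` disconnects `G` and leaves no
isolated vertices. -/
def IsRestrictedEdgeCut (G : SimpleGraph V) (F : Set (Sym2 V)) : Prop :=
  F ⊆ G.edgeSet ∧ ¬(G.deleteEdges F).Connected ∧ ∀ v : V, ∃ w : V, (G.deleteEdges F).Adj v w

/-- The restricted edge-connectivity `λ'(G)`. -/
noncomputable def restrictedEdgeConn (G : SimpleGraph V) : ℕ :=
  sInf {k | ∃ F : Set (Sym2 V), IsRestrictedEdgeCut G F ∧ F.ncard = k}

/-- The vertex-connectivity `κ(G)`: the minimum size of a set of vertices whose removal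
leaves a disconnected graph or a graph with at most one vertex. -/
noncomputable def vertexConn (G : SimpleGraph V) : ℕ :=
  sInf {k | ∃ S : Set V, S.ncard = k ∧
    (¬(G.induce (Sᶜ : Set V)).Connected ∨ (Sᶜ : Set V).ncard ≤ 1)}

/-- The minimum edge-degree `ξ(G) = min {d(u) + d(v) - 2 : uv ∈ E(G)}`. -/
noncomputable def minEdgeDegree (G : SimpleGraph V) : ℕ :=
  sInf {k | ∃ u v : V, G.Adj u v ∧ (G.neighborSet u).ncard + (G.neighborSet v).ncard - 2 = k}

/-- `G` is `λ'`-optimal if `λ'(G) = ξ(G)`. -/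
def LambdaPrimeOptimal (G : SimpleGraph V) : Prop :=
  restrictedEdgeConn G = minEdgeDegree G

/-- The replacement product of `G1` and `G2` with respect to an edge-labelling `ℓ`,
where `ℓ x i` is the other endpoint of the edge of `G1` labelled `i` at the vertex `x`.
Vertices `(x, i)` and `(y, j)` are adjacent iff either `x = y` and `i j ∈ E(G2)`, or
`x y ∈ E(G1)` and the edge `x y` is labelled `i` at `x` and `j` at `y`. -/
def replacementProduct {V1 V2 : Type*} (G1 : SimpleGraph V1) (G2 : SimpleGraph V2)
    (ℓ : V1 → V2 → V1) : SimpleGraph (V1 × V2) where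
  Adj p q := (p.1 = q.1 ∧ G2.Adj p.2 q.2) ∨
    (G1.Adj p.1 q.1 ∧ ℓ p.1 p.2 = q.1 ∧ ℓ q.1 q.2 = p.1)
  symm := ⟨by
    rintro p q (⟨h1, h2⟩ | ⟨h1, h2, h3⟩)
    · exact Or.inl ⟨h1.symm, h2.symm⟩
    · exact Or.inr ⟨h1.symm, h3, h2⟩⟩
  loopless := ⟨by
    rintro p (⟨_, h⟩ | ⟨h, _⟩)
    · exact G2.irrefl h
    · exact G1.irrefl h⟩

/-- `ℓ` is a valid edge-labelling of `G1` for the replacement product: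
for each vertex `x`, `ℓ x` is injective and `ℓ x i` is always a neighbour of `x`
(hence `ℓ x` enumerates the neighbours of `x` when `G1` is `|V2|`-regular). -/
def IsRPLabelling {V1 V2 : Type*} (G1 : SimpleGraph V1) (ℓ : V1 → V2 → V1) : Prop :=
  (∀ x, Function.Injective (ℓ x)) ∧ ∀ x i, G1.Adj x (ℓ x i)

end Defs

open Fin.NatCast


section Generic
variable {W : Type*}

lemma mem_of_reachable_closed {G : SimpleGraph W} {S : Set W}
    (hcl : ∀ a b, G.Adj a b → a ∈ S → b ∈ S) {a b : W} (h : G.Reachable a b)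
    (ha : a ∈ S) : b ∈ S := by
  obtain ⟨w⟩ := h
  induction w with
  | nil => exact ha
  | cons h' _ ih => exact ih (hcl _ _ h' ha)

lemma not_connected_of_closed {G : SimpleGraph W} {S : Set W}
    (hS : S.Nonempty) (hSc : Sᶜ.Nonempty)
    (hcl : ∀ a b, G.Adj a b → a ∈ S → b ∈ S) : ¬ G.Connected := by
  intro h
  obtain ⟨s, hs⟩ := hS
  obtain ⟨t, ht⟩ := hSc
  exact ht (mem_of_reachable_closed hcl (h.preconnected s t) hs)

lemma exists_closed_of_not_connected {G : SimpleGraph W} [Nonempty W]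
    (h : ¬ G.Connected) :
    ∃ S : Set W, S.Nonempty ∧ Sᶜ.Nonempty ∧ ∀ a b, G.Adj a b → a ∈ S → b ∈ S := by
  have hp : ¬ G.Preconnected := fun hp => h ⟨hp⟩
  simp only [Preconnected, not_forall] at hp
  obtain ⟨u, v, huv⟩ := hp
  refine ⟨{w | G.Reachable u w}, ⟨u, Reachable.refl u⟩, ⟨v, huv⟩, ?_⟩
  intro a b hab ha
  exact ha.trans hab.reachable

lemma closed_compl {G : SimpleGraph W} {S : Set W}
    (hcl : ∀ a b, G.Adj a b → a ∈ S → b ∈ S) :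
    ∀ a b, G.Adj a b → a ∈ Sᶜ → b ∈ Sᶜ := by
  intro a b hab ha hb
  exact ha (hcl _ _ hab.symm hb)

lemma four_le_ncard {α : Type*} {s : Set α} (hfin : s.Finite) {a b c d : α}
    (ha : a ∈ s) (hb : b ∈ s) (hc : c ∈ s) (hd : d ∈ s)
    (hab : a ≠ b) (hac : a ≠ c) (had : a ≠ d) (hbc : b ≠ c) (hbd : b ≠ d)
    (hcd : c ≠ d) : 4 ≤ s.ncard := by
  classical
  have hsub : ({a, b, c, d} : Set α) ⊆ s := by
    intro x hx
    rcases hx with rfl | rfl | rfl | rfl <;> assumption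
  have h4 : ({a, b, c, d} : Set α).ncard = 4 := by
    rw [Set.ncard_insert_of_notMem (by simp [hab, hac, had]) (Set.toFinite _),
        Set.ncard_insert_of_notMem (by simp [hbc, hbd]) (Set.toFinite _),
        Set.ncard_insert_of_notMem (by simp [hcd]) (Set.toFinite _),
        Set.ncard_singleton]
  calc 4 = ({a, b, c, d} : Set α).ncard := h4.symm
    _ ≤ s.ncard := Set.ncard_le_ncard hsub hfin

/-- Boundary lemma on `Fin n`: a set containing `a` but not `b` has an "exit" edge. -/
lemma fin_exists_exit {n : ℕ} [NeZero n] {P : Set (Fin n)} {a b : Fin n}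
    (ha : a ∈ P) (hb : b ∉ P) : ∃ i, i ∈ P ∧ i + 1 ∉ P := by
  have hex : ∃ k : ℕ, a + (k : Fin n) ∉ P := by
    refine ⟨(b - a).val, ?_⟩
    rwa [Fin.cast_val_eq_self, add_sub_cancel]
  classical
  obtain ⟨k, hk, hmin⟩ := Nat.findX hex
  cases k with
  | zero => exact absurd (by simpa using ha) hk
  | succ m =>
    refine ⟨a + (m : Fin n), not_not.mp (hmin m (Nat.lt_succ_self m)), ?_⟩
    have hc : ((m+1 : ℕ) : Fin n) = (m : Fin n) + 1 := by push_cast; ring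
    rw [add_assoc, ← hc]
    exact hk

end Generic
section RPPart
variable {V : Type*} [Fintype V] {n : ℕ} {G : SimpleGraph V} {ℓ : V → Fin n → V}

lemma rp_adj {V1 V2 : Type*} {G1 : SimpleGraph V1} {G2 : SimpleGraph V2}
    {ℓ' : V1 → V2 → V1} {p q : V1 × V2} :
    (replacementProduct G1 G2 ℓ').Adj p q ↔
      (p.1 = q.1 ∧ G2.Adj p.2 q.2) ∨
      (G1.Adj p.1 q.1 ∧ ℓ' p.1 p.2 = q.1 ∧ ℓ' q.1 q.2 = p.1) := Iff.rfl

lemma ell_surj (hℓ : IsRPLabelling G ℓ) (hreg : ∀ x : V, (G.neighborSet x).ncard = n)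
    {x y : V} (h : G.Adj x y) : ∃ i, ℓ x i = y := by
  have hsub : Set.range (ℓ x) ⊆ G.neighborSet x := by
    rintro _ ⟨i, rfl⟩; exact hℓ.2 x i
  have hcard : (Set.range (ℓ x)).ncard = n := by
    rw [← Set.image_univ, Set.ncard_image_of_injective _ (hℓ.1 x), Set.ncard_univ,
      Nat.card_eq_fintype_card, Fintype.card_fin]
  have heq : Set.range (ℓ x) = G.neighborSet x :=
    Set.eq_of_subset_of_ncard_le hsub (by rw [hcard, hreg]) (Set.toFinite _)
  have : y ∈ Set.range (ℓ x) := heq ▸ h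
  exact this

set_option linter.unusedSectionVars false

lemma fin_val_one' [NeZero n] (hn : 2 ≤ n) : ((1 : Fin n) : ℕ) = 1 := by
  have h : (((1:ℕ) : Fin n) : ℕ) = 1 % n := Fin.val_natCast 1 n
  rw [Nat.cast_one] at h
  rw [h]; exact Nat.mod_eq_of_lt (by omega)

lemma cyc_adj_succ [NeZero n] (hn : 2 ≤ n) (i : Fin n) :
    (SimpleGraph.cycleGraph n).Adj i (i + 1) := by
  rw [SimpleGraph.cycleGraph_adj']
  right
  rw [add_sub_cancel_left]
  exact fin_val_one' hn

lemma rp_cloud_adj [NeZero n] (hn : 2 ≤ n) (x : V) (i : Fin n) :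
    (replacementProduct G (SimpleGraph.cycleGraph n) ℓ).Adj (x, i) (x, i + 1) :=
  Or.inl ⟨rfl, cyc_adj_succ hn i⟩

lemma cross_spec {p q : V × Fin n}
    (h : (replacementProduct G (SimpleGraph.cycleGraph n) ℓ).Adj p q) (hne : p.1 ≠ q.1) :
    G.Adj p.1 q.1 ∧ ℓ p.1 p.2 = q.1 ∧ ℓ q.1 q.2 = p.1 := by
  rcases h with ⟨h1, _⟩ | h
  · exact absurd h1 hne
  · exact h

lemma cross_exists (hℓ : IsRPLabelling G ℓ) (hreg : ∀ x : V, (G.neighborSet x).ncard = n)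
    {x y : V} (h : G.Adj x y) :
    ∃ i j, ℓ x i = y ∧ ℓ y j = x ∧
      (replacementProduct G (SimpleGraph.cycleGraph n) ℓ).Adj (x, i) (y, j) := by
  obtain ⟨i, hi⟩ := ell_surj hℓ hreg h
  obtain ⟨j, hj⟩ := ell_surj hℓ hreg h.symm
  exact ⟨i, j, hi, hj, Or.inr ⟨h, hi, hj⟩⟩

lemma cross_unique (hℓ : IsRPLabelling G ℓ) {x y : V} {i i' j j' : Fin n}
    (h : (replacementProduct G (SimpleGraph.cycleGraph n) ℓ).Adj (x, i) (y, j))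
    (h' : (replacementProduct G (SimpleGraph.cycleGraph n) ℓ).Adj (x, i') (y, j'))
    (hne : x ≠ y) : i = i' ∧ j = j' := by
  obtain ⟨_, hxy, hyx⟩ := cross_spec h hne
  obtain ⟨_, hxy', hyx'⟩ := cross_spec h' hne
  exact ⟨hℓ.1 x (hxy.trans hxy'.symm), hℓ.1 y (hyx.trans hyx'.symm)⟩

/-- The lift of an edge-set of `G` to the set of corresponding cross edges. -/
def liftCut (G : SimpleGraph V) (ℓ : V → Fin n → V) (F : Set (Sym2 V)) :
    Set (Sym2 (V × Fin n)) :=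
  {e | e ∈ (replacementProduct G (SimpleGraph.cycleGraph n) ℓ).edgeSet ∧
    Sym2.map Prod.fst e ∈ F}

lemma liftCut_image (hℓ : IsRPLabelling G ℓ) (hreg : ∀ x : V, (G.neighborSet x).ncard = n)
    {F : Set (Sym2 V)} (hF : F ⊆ G.edgeSet) :
    Sym2.map Prod.fst '' liftCut G ℓ F = F := by
  apply subset_antisymm
  · rintro _ ⟨e, he, rfl⟩
    obtain ⟨-, h2⟩ := he
    exact h2
  · intro e he
    induction e using Sym2.ind with
    | _ u v =>
      have hadj : G.Adj u v := (G.mem_edgeSet).1 (hF he)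
      obtain ⟨i, j, hi, hj, hH⟩ := cross_exists hℓ hreg hadj
      exact ⟨s((u,i),(v,j)), ⟨(SimpleGraph.mem_edgeSet _).2 hH,
        by rw [Sym2.map_pair_eq]; exact he⟩, by rw [Sym2.map_pair_eq]⟩

lemma liftCut_injOn (hℓ : IsRPLabelling G ℓ) {F : Set (Sym2 V)} (hF : F ⊆ G.edgeSet) :
    Set.InjOn (Sym2.map Prod.fst) (liftCut G ℓ F) := by
  intro e he e' he' heq
  induction e using Sym2.ind with
  | _ p q =>
  induction e' using Sym2.ind with
  | _ p' q' =>
  obtain ⟨he1, he2⟩ := he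
  obtain ⟨he1', he2'⟩ := he'
  have hpq : (replacementProduct G (SimpleGraph.cycleGraph n) ℓ).Adj p q :=
    (SimpleGraph.mem_edgeSet _).1 he1
  have hpq' : (replacementProduct G (SimpleGraph.cycleGraph n) ℓ).Adj p' q' :=
    (SimpleGraph.mem_edgeSet _).1 he1'
  rw [Sym2.map_pair_eq, Sym2.map_pair_eq, Sym2.eq_iff] at heq
  rw [Sym2.map_pair_eq] at he2 he2'
  have hd : p.1 ≠ q.1 := by
    intro h
    exact G.not_isDiag_of_mem_edgeSet (hF he2) (by rw [h]; exact Sym2.mk_isDiag_iff.2 rfl)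
  have hd' : p'.1 ≠ q'.1 := by
    intro h
    exact G.not_isDiag_of_mem_edgeSet (hF he2') (by rw [h]; exact Sym2.mk_isDiag_iff.2 rfl)
  obtain ⟨hG, h1, h2⟩ := cross_spec hpq hd
  obtain ⟨hG', h1', h2'⟩ := cross_spec hpq' hd'
  rcases heq with ⟨ha, hb⟩ | ⟨ha, hb⟩
  · have hp2 : p.2 = p'.2 := hℓ.1 p.1 (by rw [h1]; rw [← ha] at h1'; rw [h1', hb])
    have hq2 : q.2 = q'.2 := hℓ.1 q.1 (by rw [h2]; rw [← hb] at h2'; rw [h2', ha])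
    rw [Prod.ext ha hp2, Prod.ext hb hq2]
  · have hp2 : p.2 = q'.2 := hℓ.1 p.1 (by rw [h1]; rw [← ha] at h2'; rw [h2', hb])
    have hq2 : q.2 = p'.2 := hℓ.1 q.1 (by rw [h2]; rw [← hb] at h1'; rw [h1', ha])
    rw [Prod.ext ha hp2, Prod.ext hb hq2, Sym2.eq_swap]

lemma liftCut_ncard (hℓ : IsRPLabelling G ℓ) (hreg : ∀ x : V, (G.neighborSet x).ncard = n)
    {F : Set (Sym2 V)} (hF : F ⊆ G.edgeSet) : (liftCut G ℓ F).ncard = F.ncard := by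
  conv_rhs => rw [← liftCut_image hℓ hreg hF]
  rw [Set.ncard_image_of_injOn (liftCut_injOn hℓ hF)]

end RPPart
section Part3
set_option linter.unusedSectionVars false
set_option linter.unusedVariables false
variable {V : Type*} [Fintype V] {n : ℕ} {G : SimpleGraph V} {ℓ : V → Fin n → V}

lemma edgeConn_le_ncard_edgeBoundary {A : Set V} (hA : A.Nonempty) (hAc : Aᶜ.Nonempty) :
    edgeConn G ≤ (edgeBoundary G A).ncard := by
  apply Nat.sInf_le
  refine ⟨edgeBoundary G A, fun e he => he.1, rfl, not_connected_of_closed hA hAc ?_⟩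
  intro a b hab ha
  by_contra hb
  rw [SimpleGraph.deleteEdges_adj] at hab
  exact hab.2 ⟨(SimpleGraph.mem_edgeSet _).2 hab.1, a, ha, b, hb, rfl⟩

lemma ncard_edgeBoundary_singleton (x : V) :
    (edgeBoundary G {x}).ncard = (G.neighborSet x).ncard := by
  have heq : edgeBoundary G {x} = (fun v => s(x, v)) '' G.neighborSet x := by
    apply subset_antisymm
    · rintro e ⟨hes, u, hu, v, hv, rfl⟩
      rcases hu with rfl
      exact ⟨v, (SimpleGraph.mem_edgeSet _).1 hes, rfl⟩
    · rintro _ ⟨v, hv, rfl⟩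
      exact ⟨(SimpleGraph.mem_edgeSet _).2 hv, x, rfl, v,
        fun h => (hv : G.Adj x v).ne' (Set.mem_singleton_iff.1 h), rfl⟩
  rw [heq, Set.ncard_image_of_injective _ fun a b hab => Sym2.congr_right.1 hab]

lemma nontrivial_of_three_le_vertexConn (h3 : 3 ≤ vertexConn G) : Nontrivial V := by
  by_contra h
  rw [not_nontrivial_iff_subsingleton] at h
  have h0 : (0 : ℕ) ∈ {k | ∃ S : Set V, S.ncard = k ∧
      (¬(G.induce (Sᶜ : Set V)).Connected ∨ (Sᶜ : Set V).ncard ≤ 1)} := by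
    refine ⟨∅, Set.ncard_empty _, Or.inr ?_⟩
    rw [Set.compl_empty, Set.ncard_univ, Nat.card_eq_fintype_card]
    exact Fintype.card_le_one_iff_subsingleton.2 h
  have h' : vertexConn G ≤ 0 := Nat.sInf_le h0
  omega

lemma three_le_n (h3 : 3 ≤ vertexConn G)
    (hreg : ∀ x : V, (G.neighborSet x).ncard = n) : 3 ≤ n := by
  have hV := nontrivial_of_three_le_vertexConn h3
  obtain ⟨x⟩ : Nonempty V := hV.to_nonempty
  refine le_trans h3 (Nat.sInf_le ?_)
  refine ⟨G.neighborSet x, hreg x, ?_⟩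
  by_cases hy : ∃ y, y ∈ (G.neighborSet x)ᶜ ∧ y ≠ x
  · left
    obtain ⟨y, hy1, hy2⟩ := hy
    have hx : x ∈ (G.neighborSet x)ᶜ := fun h => G.irrefl h
    apply not_connected_of_closed (S := {z : ↥((G.neighborSet x)ᶜ) | (z : V) = x})
    · exact ⟨⟨x, hx⟩, rfl⟩
    · exact ⟨⟨y, hy1⟩, hy2⟩
    · intro a b hab ha
      have hadj : G.Adj ↑a ↑b := hab
      rw [Set.mem_setOf_eq] at ha
      rw [ha] at hadj
      exact absurd hadj b.2
  · right
    push_neg at hy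
    calc ((G.neighborSet x)ᶜ).ncard ≤ ({x} : Set V).ncard :=
          Set.ncard_le_ncard (fun z hz => hy z hz) (Set.toFinite _)
      _ = 1 := Set.ncard_singleton x

lemma edgeConn_le_n (h3 : 3 ≤ vertexConn G)
    (hreg : ∀ x : V, (G.neighborSet x).ncard = n) : edgeConn G ≤ n := by
  have hV := nontrivial_of_three_le_vertexConn h3
  obtain ⟨x⟩ : Nonempty V := hV.to_nonempty
  obtain ⟨y, hy⟩ := exists_ne x
  calc edgeConn G ≤ (edgeBoundary G {x}).ncard :=
        edgeConn_le_ncard_edgeBoundary ⟨x, rfl⟩ ⟨y, hy⟩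
    _ = n := by rw [ncard_edgeBoundary_singleton, hreg]

lemma edgeConnSet_nonempty (h3 : 3 ≤ vertexConn G)
    (hreg : ∀ x : V, (G.neighborSet x).ncard = n) :
    {k | ∃ F : Set (Sym2 V), F ⊆ G.edgeSet ∧ F.ncard = k ∧
      ¬(G.deleteEdges F).Connected}.Nonempty := by
  have hV := nontrivial_of_three_le_vertexConn h3
  obtain ⟨x⟩ : Nonempty V := hV.to_nonempty
  obtain ⟨y, hy⟩ := exists_ne x
  refine ⟨(edgeBoundary G {x}).ncard, edgeBoundary G {x}, fun e he => he.1, rfl, ?_⟩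
  apply not_connected_of_closed (S := ({x} : Set V)) ⟨x, rfl⟩ ⟨y, hy⟩
  intro a b hab ha
  by_contra hb
  rw [SimpleGraph.deleteEdges_adj] at hab
  exact hab.2 ⟨(SimpleGraph.mem_edgeSet _).2 hab.1, a, ha, b, hb, rfl⟩

lemma cloud_edge_not_in_liftCut {F : Set (Sym2 V)} (hF : F ⊆ G.edgeSet) (x : V)
    (i i' : Fin n) : s((x, i), (x, i')) ∉ liftCut G ℓ F := by
  rintro ⟨-, h2⟩
  rw [Sym2.map_pair_eq] at h2
  exact G.not_isDiag_of_mem_edgeSet (hF h2) (Sym2.mk_isDiag_iff.2 rfl)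

lemma proj_reachable {F : Set (Sym2 V)} {p q : V × Fin n}
    (h : ((replacementProduct G (SimpleGraph.cycleGraph n) ℓ).deleteEdges
      (liftCut G ℓ F)).Reachable p q) :
    (G.deleteEdges F).Reachable p.1 q.1 := by
  obtain ⟨w⟩ := h
  induction w with
  | nil => exact SimpleGraph.Reachable.refl _
  | cons h' w ih =>
    rw [SimpleGraph.deleteEdges_adj] at h'
    rcases h'.1 with ⟨h1, -⟩ | ⟨hG, -, -⟩
    · exact h1 ▸ ih
    · refine SimpleGraph.Reachable.trans (SimpleGraph.Adj.reachable ?_) ih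
      rw [SimpleGraph.deleteEdges_adj]
      exact ⟨hG, fun hmem => h'.2 ⟨(SimpleGraph.mem_edgeSet _).2 h'.1,
        by rw [Sym2.map_pair_eq]; exact hmem⟩⟩

end Part3
section Part4
set_option linter.unusedSectionVars false
set_option linter.unusedVariables false
variable {V : Type*} [Fintype V] {n : ℕ} {G : SimpleGraph V} {ℓ : V → Fin n → V}

lemma edgeConn_mem_restrictedSet (hℓ : IsRPLabelling G ℓ) (h3 : 3 ≤ vertexConn G)
    (hreg : ∀ x : V, (G.neighborSet x).ncard = n) :
    ∃ F' : Set (Sym2 (V × Fin n)),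
      IsRestrictedEdgeCut (replacementProduct G (SimpleGraph.cycleGraph n) ℓ) F' ∧
      F'.ncard = edgeConn G := by
  have hn3 : 3 ≤ n := three_le_n h3 hreg
  haveI : NeZero n := ⟨by omega⟩
  have hV := nontrivial_of_three_le_vertexConn h3
  obtain ⟨FG, hFGsub, hFGcard, hFGdisc⟩ := Nat.sInf_mem (edgeConnSet_nonempty h3 hreg)
  refine ⟨liftCut G ℓ FG, ⟨fun e he => he.1, ?_, ?_⟩, by rw [liftCut_ncard hℓ hreg hFGsub, hFGcard]; rfl⟩
  · -- not connected
    have hne : Nonempty V := hV.to_nonempty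
    have hp : ¬ (G.deleteEdges FG).Preconnected := fun hp => hFGdisc ⟨hp⟩
    simp only [SimpleGraph.Preconnected, not_forall] at hp
    obtain ⟨u, v, huv⟩ := hp
    intro hc
    exact huv (proj_reachable (hc.preconnected (u, 0) (v, 0)))
  · -- no isolated vertices
    rintro ⟨x, i⟩
    refine ⟨(x, i + 1), ?_⟩
    rw [SimpleGraph.deleteEdges_adj]
    exact ⟨rp_cloud_adj (by omega) x i, cloud_edge_not_in_liftCut hFGsub x i (i + 1)⟩

lemma min_le_restrictedEdgeConn_iff_aux : True := trivial

end Part4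
section Part5
set_option linter.unusedSectionVars false
set_option linter.unusedVariables false
variable {V : Type*} [Fintype V] {n : ℕ} {G : SimpleGraph V} {ℓ : V → Fin n → V}

lemma cyc_nbr [NeZero n] (hn : 2 ≤ n) {i j : Fin n} (h : (SimpleGraph.cycleGraph n).Adj i j) :
    j = i + 1 ∨ j = i - 1 := by
  rw [SimpleGraph.cycleGraph_adj'] at h
  rcases h with h | h
  · right
    have h1 : i - j = 1 := Fin.val_injective (h.trans (fin_val_one' hn).symm)
    rw [sub_eq_iff_eq_add] at h1
    rw [h1, add_comm, add_sub_cancel_right]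
  · left
    have h1 : j - i = 1 := Fin.val_injective (h.trans (fin_val_one' hn).symm)
    rw [sub_eq_iff_eq_add] at h1
    rw [h1, add_comm]

lemma four_mem_restrictedSet (hℓ : IsRPLabelling G ℓ) (h3 : 3 ≤ vertexConn G)
    (hreg : ∀ x : V, (G.neighborSet x).ncard = n) (hn5 : 5 ≤ n) :
    ∃ F' : Set (Sym2 (V × Fin n)),
      IsRestrictedEdgeCut (replacementProduct G (SimpleGraph.cycleGraph n) ℓ) F' ∧
      F'.ncard = 4 := by
  haveI : NeZero n := ⟨by omega⟩
  have hn2 : 2 ≤ n := by omega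
  obtain ⟨x⟩ : Nonempty V := (nontrivial_of_three_le_vertexConn h3).to_nonempty
  set d : Fin n := ((n - 1 : ℕ) : Fin n) with hd_def
  -- value facts
  have hv0 : ((0 : Fin n) : ℕ) = 0 := rfl
  have hv1 : ((1 : Fin n) : ℕ) = 1 := fin_val_one' hn2
  have hv2 : (((1 : Fin n) + 1 : Fin n) : ℕ) = 2 := by
    have h2 : ((2 : ℕ) : Fin n) = 1 + 1 := by push_cast; exact one_add_one_eq_two.symm
    rw [← h2, Fin.val_natCast]
    exact Nat.mod_eq_of_lt (by omega)
  have hvd : (d : ℕ) = n - 1 := by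
    rw [hd_def, Fin.val_natCast]
    exact Nat.mod_eq_of_lt (by omega)
  have hd1 : d + 1 = 0 := by
    have h2 : d + 1 = ((n - 1 + 1 : ℕ) : Fin n) := by rw [hd_def]; push_cast; ring
    rw [h2, show n - 1 + 1 = n by omega, Fin.natCast_self]
  have hne : ∀ a b : Fin n, (a : ℕ) ≠ (b : ℕ) → a ≠ b := fun a b h hh => h (hh ▸ rfl)
  have e01 : (0 : Fin n) ≠ 1 := hne _ _ (by omega)
  have e10 : (1 : Fin n) ≠ 0 := e01.symm
  have e0t : (0 : Fin n) ≠ 1 + 1 := hne _ _ (by rw [hv0, hv2]; omega)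
  have et0 : (1 : Fin n) + 1 ≠ 0 := e0t.symm
  have e1t : (1 : Fin n) ≠ 1 + 1 := hne _ _ (by rw [hv1, hv2]; omega)
  have et1 : (1 : Fin n) + 1 ≠ 1 := e1t.symm
  have ed0 : d ≠ 0 := hne _ _ (by rw [hvd, hv0]; omega)
  have e0d : (0 : Fin n) ≠ d := ed0.symm
  have ed1 : d ≠ 1 := hne _ _ (by rw [hvd, hv1]; omega)
  have e1d : (1 : Fin n) ≠ d := ed1.symm
  have edt : d ≠ 1 + 1 := hne _ _ (by rw [hvd, hv2]; omega)
  have etd : (1 : Fin n) + 1 ≠ d := edt.symm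
  -- cross data
  have hx0 : G.Adj x (ℓ x 0) := hℓ.2 x 0
  obtain ⟨j0, hj0⟩ := ell_surj hℓ hreg hx0.symm
  have hx1 : G.Adj x (ℓ x 1) := hℓ.2 x 1
  obtain ⟨j1, hj1⟩ := ell_surj hℓ hreg hx1.symm
  have hxy0 : x ≠ ℓ x 0 := hx0.ne
  have hxy1 : x ≠ ℓ x 1 := hx1.ne
  have hy0x : ℓ x 0 ≠ x := hx0.ne'
  have hy1x : ℓ x 1 ≠ x := hx1.ne'
  set c1 : Sym2 (V × Fin n) := s((x, d), (x, 0)) with hc1_def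
  set c2 : Sym2 (V × Fin n) := s((x, 1), (x, 1 + 1)) with hc2_def
  set cr0 : Sym2 (V × Fin n) := s((x, 0), (ℓ x 0, j0)) with hcr0_def
  set cr1 : Sym2 (V × Fin n) := s((x, 1), (ℓ x 1, j1)) with hcr1_def
  set F4 : Set (Sym2 (V × Fin n)) := {c1, c2, cr0, cr1} with hF4_def
  have hadj_c1 : (replacementProduct G (SimpleGraph.cycleGraph n) ℓ).Adj (x, d) (x, 0) := by
    have := rp_cloud_adj (G := G) (ℓ := ℓ) hn2 x d
    rwa [hd1] at this
  have hadj_c2 : (replacementProduct G (SimpleGraph.cycleGraph n) ℓ).Adj (x, 1) (x, 1 + 1) :=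
    rp_cloud_adj hn2 x 1
  have hadj_cr0 : (replacementProduct G (SimpleGraph.cycleGraph n) ℓ).Adj (x, 0) (ℓ x 0, j0) :=
    Or.inr ⟨hx0, rfl, hj0⟩
  have hadj_cr1 : (replacementProduct G (SimpleGraph.cycleGraph n) ℓ).Adj (x, 1) (ℓ x 1, j1) :=
    Or.inr ⟨hx1, rfl, hj1⟩
  -- pairwise distinctness
  have d12 : c1 ≠ c2 := by
    intro h; rw [hc1_def, hc2_def, Sym2.eq_iff] at h
    simp only [Prod.mk.injEq] at h; tauto
  have d1r0 : c1 ≠ cr0 := by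
    intro h; rw [hc1_def, hcr0_def, Sym2.eq_iff] at h
    simp only [Prod.mk.injEq] at h; tauto
  have d1r1 : c1 ≠ cr1 := by
    intro h; rw [hc1_def, hcr1_def, Sym2.eq_iff] at h
    simp only [Prod.mk.injEq] at h; tauto
  have d2r0 : c2 ≠ cr0 := by
    intro h; rw [hc2_def, hcr0_def, Sym2.eq_iff] at h
    simp only [Prod.mk.injEq] at h; tauto
  have d2r1 : c2 ≠ cr1 := by
    intro h; rw [hc2_def, hcr1_def, Sym2.eq_iff] at h
    simp only [Prod.mk.injEq] at h; tauto
  have dr01 : cr0 ≠ cr1 := by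
    intro h; rw [hcr0_def, hcr1_def, Sym2.eq_iff] at h
    simp only [Prod.mk.injEq] at h
    rcases h with ⟨⟨-, h⟩, -⟩ | ⟨⟨h, -⟩, -⟩
    · exact e01 h
    · exact hxy1 h
  refine ⟨F4, ⟨?_, ?_, ?_⟩, ?_⟩
  · -- subset of edges
    intro e he
    rw [hF4_def] at he
    simp only [Set.mem_insert_iff, Set.mem_singleton_iff] at he
    rcases he with rfl | rfl | rfl | rfl
    · exact (SimpleGraph.mem_edgeSet _).2 hadj_c1
    · exact (SimpleGraph.mem_edgeSet _).2 hadj_c2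
    · exact (SimpleGraph.mem_edgeSet _).2 hadj_cr0
    · exact (SimpleGraph.mem_edgeSet _).2 hadj_cr1
  · -- disconnected
    apply not_connected_of_closed (S := {((x, 0) : V × Fin n), (x, 1)})
    · exact ⟨(x, 0), Or.inl rfl⟩
    · refine ⟨(x, 1 + 1), ?_⟩
      simp only [Set.mem_compl_iff, Set.mem_insert_iff, Set.mem_singleton_iff, Prod.mk.injEq,
        not_or, not_and]
      exact ⟨fun _ => et0, fun _ => et1⟩
    · rintro p w hpw hp
      rw [SimpleGraph.deleteEdges_adj] at hpw
      obtain ⟨hH, hnF⟩ := hpw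
      simp only [Set.mem_insert_iff, Set.mem_singleton_iff] at hp
      rcases hp with rfl | rfl
      · -- p = (x, 0)
        rcases hH with ⟨h1, h2⟩ | ⟨hg, hl1, hl2⟩
        · -- cloud step
          rcases cyc_nbr hn2 h2 with hw | hw
          · right
            have : w = (x, (0 : Fin n) + 1) := Prod.ext h1.symm hw
            rw [this, zero_add]; rfl
          · exfalso
            have hw' : w = (x, d) := by
              refine Prod.ext h1.symm ?_
              rw [hw, eq_comm, eq_sub_iff_add_eq, hd1]
            apply hnF
            have : s(((x, 0) : V × Fin n), w) = c1 := by
              rw [hw', hc1_def, Sym2.eq_swap]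
            rw [this, hF4_def]
            exact Or.inl rfl
        · -- cross step
          exfalso
          apply hnF
          have hw1 : w.1 = ℓ x 0 := hl1.symm
          have hw2 : w.2 = j0 := by
            apply hℓ.1 (ℓ x 0)
            rw [hj0, ← hw1]
            exact hl2
          have : w = (ℓ x 0, j0) := Prod.ext hw1 hw2
          rw [this, hF4_def]
          right; right; left; rfl
      · -- p = (x, 1)
        rcases hH with ⟨h1, h2⟩ | ⟨hg, hl1, hl2⟩
        · rcases cyc_nbr hn2 h2 with hw | hw
          · exfalso
            apply hnF
            have : w = (x, (1 : Fin n) + 1) := Prod.ext h1.symm hw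
            rw [this, hF4_def]
            right; left; rfl
          · left
            have : w = (x, (0 : Fin n)) := by
              refine Prod.ext h1.symm ?_
              rw [hw]
              rw [eq_comm, eq_sub_iff_add_eq, zero_add]
            rw [this]
        · exfalso
          apply hnF
          have hw1 : w.1 = ℓ x 1 := hl1.symm
          have hw2 : w.2 = j1 := by
            apply hℓ.1 (ℓ x 1)
            rw [hj1, ← hw1]
            exact hl2
          have : w = (ℓ x 1, j1) := Prod.ext hw1 hw2
          rw [this, hF4_def]
          right; right; right; rfl
  · -- no isolated vertices
    have hcloud_mem : ∀ (z : V) (i j : Fin n), s((z, i), (z, j)) ∈ F4 →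
        s((z, i), (z, j)) = c1 ∨ s((z, i), (z, j)) = c2 := by
      intro z i j h
      rw [hF4_def] at h
      simp only [Set.mem_insert_iff, Set.mem_singleton_iff] at h
      rcases h with h | h | h | h
      · exact Or.inl h
      · exact Or.inr h
      · exfalso
        rw [hcr0_def, Sym2.eq_iff] at h
        simp only [Prod.mk.injEq] at h
        rcases h with ⟨⟨hz1, -⟩, ⟨hz2, -⟩⟩ | ⟨⟨hz1, -⟩, ⟨hz2, -⟩⟩
        · exact hxy0 (hz1 ▸ hz2)
        · exact hxy0 (hz2 ▸ hz1)
      · exfalso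
        rw [hcr1_def, Sym2.eq_iff] at h
        simp only [Prod.mk.injEq] at h
        rcases h with ⟨⟨hz1, -⟩, ⟨hz2, -⟩⟩ | ⟨⟨hz1, -⟩, ⟨hz2, -⟩⟩
        · exact hxy1 (hz1 ▸ hz2)
        · exact hxy1 (hz2 ▸ hz1)
    rintro ⟨z, i⟩
    by_cases hc : s(((z, i) : V × Fin n), (z, i + 1)) ∈ F4
    · refine ⟨(z, i - 1), ?_⟩
      rw [SimpleGraph.deleteEdges_adj]
      constructor
      · have h' := rp_cloud_adj (G := G) (ℓ := ℓ) hn2 z (i - 1)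
        rw [sub_add_cancel] at h'
        exact h'.symm
      · intro hc2
        have h1 := hcloud_mem z i (i + 1) hc
        have h2 := hcloud_mem z i (i - 1) hc2
        have ends1 : (z, i) = ((x, d) : V × Fin n) ∨ (z, i) = ((x, (0 : Fin n)) : V × Fin n)
            ∨ (z, i) = ((x, (1 : Fin n)) : V × Fin n)
            ∨ (z, i) = ((x, (1 : Fin n) + 1) : V × Fin n) := by
          rcases h1 with h | h
          · rw [hc1_def, Sym2.eq_iff] at h
            rcases h with ⟨ha, -⟩ | ⟨ha, -⟩
            · exact Or.inl ha
            · exact Or.inr (Or.inl ha)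
          · rw [hc2_def, Sym2.eq_iff] at h
            rcases h with ⟨ha, -⟩ | ⟨ha, -⟩
            · exact Or.inr (Or.inr (Or.inl ha))
            · exact Or.inr (Or.inr (Or.inr ha))
        -- similarly find which edge each is, and derive contradiction case by case
        have key : ∀ j : Fin n, s(((z, i) : V × Fin n), (z, j)) = c1 → i = d ∨ i = 0 := by
          intro j h
          rw [hc1_def, Sym2.eq_iff] at h
          rcases h with ⟨h, -⟩ | ⟨h, -⟩
          · exact Or.inl (congrArg Prod.snd h)
          · exact Or.inr (congrArg Prod.snd h)
        have key2 : ∀ j : Fin n, s(((z, i) : V × Fin n), (z, j)) = c2 → i = 1 ∨ i = 1 + 1 := by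
          intro j h
          rw [hc2_def, Sym2.eq_iff] at h
          rcases h with ⟨h, -⟩ | ⟨h, -⟩
          · exact Or.inl (congrArg Prod.snd h)
          · exact Or.inr (congrArg Prod.snd h)
        have same : ∀ c : Sym2 (V × Fin n), s(((z, i) : V × Fin n), (z, i + 1)) = c →
            s(((z, i) : V × Fin n), (z, i - 1)) = c → False := by
          intro c hA hB
          have heq : ((z, i + 1) : V × Fin n) = (z, i - 1) :=
            Sym2.congr_right.1 (hA.trans hB.symm)
          have h2eq : i + 1 = i - 1 := (Prod.ext_iff.1 heq).2
          have h11 : (1 : Fin n) = -1 := by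
            have h' := congrArg (fun t => (t - i : Fin n)) h2eq
            simpa [add_comm, add_sub_cancel_left, sub_sub_eq_add_sub, sub_eq_add_neg] using h'
          have h110 : (1 : Fin n) + 1 = 0 :=
            (congrArg (fun t => (1 : Fin n) + t) h11).trans (add_neg_cancel 1)
          rw [h110] at hv2
          simp at hv2
        rcases h1 with hA | hA <;> rcases h2 with hB | hB
        · exact same c1 hA hB
        · rcases key _ hA with h | h <;> rcases key2 _ hB with h' | h'
          · exact ed1 (h.symm.trans h')
          · exact edt (h.symm.trans h')
          · exact e01 (h.symm.trans h')
          · exact e0t (h.symm.trans h')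
        · rcases key2 _ hA with h | h <;> rcases key _ hB with h' | h'
          · exact e1d (h.symm.trans h')
          · exact e10 (h.symm.trans h')
          · exact etd (h.symm.trans h')
          · exact et0 (h.symm.trans h')
        · exact same c2 hA hB
    · exact ⟨(z, i + 1), SimpleGraph.deleteEdges_adj.2 ⟨rp_cloud_adj hn2 z i, hc⟩⟩
  · -- cardinality
    rw [hF4_def]
    rw [Set.ncard_insert_of_notMem (by simp [d12, d1r0, d1r1]) (Set.toFinite _),
        Set.ncard_insert_of_notMem (by simp [d2r0, d2r1]) (Set.toFinite _),
        Set.ncard_insert_of_notMem (by simp [dr01]) (Set.toFinite _),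
        Set.ncard_singleton]

end Part5
section Part6
set_option linter.unusedSectionVars false
set_option linter.unusedVariables false
variable {V : Type*} [Fintype V] {n : ℕ} {G : SimpleGraph V} {ℓ : V → Fin n → V}

lemma fin_val_two [NeZero n] (hn : 3 ≤ n) : (((1 : Fin n) + 1 : Fin n) : ℕ) = 2 := by
  have h2 : ((2 : ℕ) : Fin n) = 1 + 1 := by push_cast; exact one_add_one_eq_two.symm
  rw [← h2, Fin.val_natCast]
  exact Nat.mod_eq_of_lt (by omega)

lemma fin_succ_succ_ne [NeZero n] (hn : 3 ≤ n) (j : Fin n) : j + 1 + 1 ≠ j := by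
  intro h
  have h1 : j + ((1 : Fin n) + 1) = j + 0 := by rw [← add_assoc, h, add_zero]
  have h2 := add_left_cancel h1
  have h3 := fin_val_two (n := n) hn
  rw [h2] at h3
  simp at h3

lemma cloud_ne_cross {x : V} {a b c : Fin n} {q : V × Fin n} (hq : q.1 ≠ x) :
    s(((x, a) : V × Fin n), (x, b)) ≠ s(((x, c) : V × Fin n), q) := by
  intro h
  rw [Sym2.eq_iff] at h
  rcases h with ⟨-, h⟩ | ⟨h, -⟩
  · exact hq (congrArg Prod.fst h).symm
  · exact hq (congrArg Prod.fst h).symm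

/-- If a closed set (under `H - F`) is contained in a single cloud and is proper there,
then `F` has at least 4 edges. -/
lemma four_le_of_cloud (hℓ : IsRPLabelling G ℓ)
    (hreg : ∀ x : V, (G.neighborSet x).ncard = n) (hn : 3 ≤ n)
    {F : Set (Sym2 (V × Fin n))}
    (hnoiso : ∀ v, ∃ w, ((replacementProduct G (SimpleGraph.cycleGraph n) ℓ).deleteEdges F).Adj v w)
    {T : Set (V × Fin n)} (hTne : T.Nonempty)
    (hTcl : ∀ a b, ((replacementProduct G (SimpleGraph.cycleGraph n) ℓ).deleteEdges F).Adj a b →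
      a ∈ T → b ∈ T)
    {x : V} (hTx : ∀ p ∈ T, p.1 = x) (hxout : ∃ i : Fin n, ((x, i) : V × Fin n) ∉ T) :
    4 ≤ F.ncard := by
  haveI : NeZero n := ⟨by omega⟩
  have hn2 : 2 ≤ n := by omega
  have hbd : ∀ p w, (replacementProduct G (SimpleGraph.cycleGraph n) ℓ).Adj p w →
      p ∈ T → w ∉ T → s(p, w) ∈ F := by
    intro p w hH hp hw
    by_contra h
    exact hw (hTcl p w (SimpleGraph.deleteEdges_adj.2 ⟨hH, h⟩) hp)
  set P : Set (Fin n) := {i | ((x, i) : V × Fin n) ∈ T} with hP_def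
  obtain ⟨p0, hp0⟩ := hTne
  have hp0x : p0.1 = x := hTx p0 hp0
  have hi0 : p0.2 ∈ P := by
    rw [hP_def]
    have : ((x, p0.2) : V × Fin n) = p0 := by rw [← hp0x]
    rw [Set.mem_setOf_eq, this]
    exact hp0
  obtain ⟨bout, hbout⟩ := hxout
  have hbP : bout ∉ P := hbout
  -- two distinct members of P
  obtain ⟨w0, hw0⟩ := hnoiso (x, p0.2)
  have hw0T : w0 ∈ T := hTcl _ _ hw0 (by
    have : ((x, p0.2) : V × Fin n) = p0 := by rw [← hp0x]
    rw [this]; exact hp0)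
  have hw0x : w0.1 = x := hTx w0 hw0T
  have hw0P : w0.2 ∈ P := by
    rw [hP_def, Set.mem_setOf_eq]
    have : ((x, w0.2) : V × Fin n) = w0 := by rw [← hw0x]
    rw [this]; exact hw0T
  have hw0ne : w0.2 ≠ p0.2 := by
    intro h
    have : w0 = (x, p0.2) := Prod.ext hw0x h
    exact (SimpleGraph.deleteEdges_adj.1 hw0).1.ne' this
  -- two cycle boundary edges
  obtain ⟨i, hiP, hi1⟩ := fin_exists_exit hi0 hbP
  obtain ⟨j, hjP, hj1⟩ := fin_exists_exit (P := Pᶜ) (a := bout) (b := p0.2) hbP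
    (not_not.2 hi0)
  have hj1P : j + 1 ∈ P := not_not.1 hj1
  have hec1 : s(((x, i) : V × Fin n), (x, i + 1)) ∈ F :=
    hbd _ _ (rp_cloud_adj hn2 x i) hiP hi1
  have hec2 : s(((x, j + 1) : V × Fin n), (x, j)) ∈ F :=
    hbd _ _ (rp_cloud_adj hn2 x j).symm hj1P hjP
  have hecne : s(((x, i) : V × Fin n), (x, i + 1)) ≠ s(((x, j + 1) : V × Fin n), (x, j)) := by
    intro h
    rw [Sym2.eq_iff] at h
    simp only [Prod.mk.injEq] at h
    rcases h with ⟨⟨-, h1⟩, ⟨-, h2⟩⟩ | ⟨⟨-, h1⟩, ⟨-, h2⟩⟩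
    · -- i = j + 1, i + 1 = j
      rw [h1] at h2
      exact fin_succ_succ_ne hn j h2
    · -- i = j : contradiction with membership
      exact hjP (h1 ▸ hiP)
  -- two cross edges
  have hcross : ∀ k : Fin n, k ∈ P → ∃ q : V × Fin n, q.1 = ℓ x k ∧ q.1 ≠ x ∧
      s(((x, k) : V × Fin n), q) ∈ F := by
    intro k hk
    have hadj : G.Adj x (ℓ x k) := hℓ.2 x k
    obtain ⟨jk, hjk⟩ := ell_surj hℓ hreg hadj.symm
    have hHadj : (replacementProduct G (SimpleGraph.cycleGraph n) ℓ).Adj (x, k) (ℓ x k, jk) :=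
      Or.inr ⟨hadj, rfl, hjk⟩
    refine ⟨(ℓ x k, jk), rfl, hadj.ne', hbd _ _ hHadj hk ?_⟩
    intro hmem
    exact hadj.ne' (hTx _ hmem)
  obtain ⟨q0, hq0y, hq0x, hq0F⟩ := hcross p0.2 hi0
  obtain ⟨q1, hq1y, hq1x, hq1F⟩ := hcross w0.2 hw0P
  have hcrne : s(((x, p0.2) : V × Fin n), q0) ≠ s(((x, w0.2) : V × Fin n), q1) := by
    intro h
    rw [Sym2.eq_iff] at h
    rcases h with ⟨h1, -⟩ | ⟨h1, -⟩
    · exact hw0ne ((congrArg Prod.snd h1).symm)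
    · exact hq1x ((congrArg Prod.fst h1).symm)
  exact four_le_ncard (Set.toFinite F) hec1 hec2 hq0F hq1F hecne
    (cloud_ne_cross hq0x) (cloud_ne_cross hq1x)
    (cloud_ne_cross hq0x) (cloud_ne_cross hq1x) hcrne

end Part6
section Part7
set_option linter.unusedSectionVars false
set_option linter.unusedVariables false
variable {V : Type*} [Fintype V] {n : ℕ} {G : SimpleGraph V} {ℓ : V → Fin n → V}

lemma cloud_ne_cloud {x y : V} (hxy : x ≠ y) (a b c d : Fin n) :
    s(((x, a) : V × Fin n), (x, b)) ≠ s(((y, c) : V × Fin n), (y, d)) := by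
  intro h
  rw [Sym2.eq_iff] at h
  rcases h with ⟨h, -⟩ | ⟨h, -⟩ <;> exact hxy (congrArg Prod.fst h)

lemma cloudx_ne_pq {x : V} {a b : Fin n} {q q' : V × Fin n} (hq : q.1 ≠ x)
    (hq' : q'.1 ≠ x) : s(((x, a) : V × Fin n), (x, b)) ≠ s(q, q') := by
  intro h
  rw [Sym2.eq_iff] at h
  rcases h with ⟨h, -⟩ | ⟨h, -⟩
  · exact hq (congrArg Prod.fst h).symm
  · exact hq' (congrArg Prod.fst h).symm

lemma lower_bound_main (hℓ : IsRPLabelling G ℓ) (h3 : 3 ≤ vertexConn G)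
    (hreg : ∀ x : V, (G.neighborSet x).ncard = n) {F : Set (Sym2 (V × Fin n))}
    (hF : IsRestrictedEdgeCut (replacementProduct G (SimpleGraph.cycleGraph n) ℓ) F) :
    min (edgeConn G) 4 ≤ F.ncard := by
  have hn : 3 ≤ n := three_le_n h3 hreg
  haveI : NeZero n := ⟨by omega⟩
  have hn2 : 2 ≤ n := by omega
  have hV : Nontrivial V := nontrivial_of_three_le_vertexConn h3
  haveI : Nonempty V := hV.to_nonempty
  haveI : Nonempty (Fin n) := ⟨0⟩
  by_contra hlt
  push_neg at hlt
  rw [lt_min_iff] at hlt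
  obtain ⟨hltconn, hlt4⟩ := hlt
  obtain ⟨hFsub, hFdisc, hFnoiso⟩ := hF
  obtain ⟨S, hSne, hScne, hScl⟩ := exists_closed_of_not_connected hFdisc
  have hbd : ∀ p w, (replacementProduct G (SimpleGraph.cycleGraph n) ℓ).Adj p w →
      p ∈ S → w ∉ S → s(p, w) ∈ F := by
    intro p w hH hp hw
    by_contra h
    exact hw (hScl p w (SimpleGraph.deleteEdges_adj.2 ⟨hH, h⟩) hp)
  set A : Set V := {x | ∀ i : Fin n, ((x, i) : V × Fin n) ∈ S} with hA_def
  set B : Set V := {x | ∀ i : Fin n, ((x, i) : V × Fin n) ∉ S} with hB_def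
  have hAB : ∀ x, x ∈ A → x ∈ B → False := fun x hA' hB' => hB' 0 (hA' 0)
  have htrich : ∀ x, x ∈ A ∨ x ∈ B ∨
      ((∃ i : Fin n, ((x, i) : V × Fin n) ∈ S) ∧ (∃ i : Fin n, ((x, i) : V × Fin n) ∉ S)) := by
    intro x
    by_cases h1 : ∀ i : Fin n, ((x, i) : V × Fin n) ∈ S
    · exact Or.inl h1
    by_cases h2 : ∀ i : Fin n, ((x, i) : V × Fin n) ∉ S
    · exact Or.inr (Or.inl h2)
    push_neg at h1 h2
    exact Or.inr (Or.inr ⟨h2, h1⟩)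
  -- two distinct cycle edges in F at each split cloud
  have hsplit_edges : ∀ x : V,
      (∃ i : Fin n, ((x, i) : V × Fin n) ∈ S) → (∃ i : Fin n, ((x, i) : V × Fin n) ∉ S) →
      ∃ (a b c d : Fin n), s(((x, a) : V × Fin n), (x, b)) ∈ F ∧
        s(((x, c) : V × Fin n), (x, d)) ∈ F ∧
        s(((x, a) : V × Fin n), (x, b)) ≠ s(((x, c) : V × Fin n), (x, d)) := by
    intro x hin hout
    obtain ⟨i0, hi0⟩ := hin
    obtain ⟨b0, hb0⟩ := hout
    set P : Set (Fin n) := {i | ((x, i) : V × Fin n) ∈ S} with hP_def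
    obtain ⟨i, hiP, hi1⟩ := fin_exists_exit (P := P) (a := i0) (b := b0) hi0 hb0
    obtain ⟨j, hjP, hj1⟩ := fin_exists_exit (P := Pᶜ) (a := b0) (b := i0) hb0 (not_not.2 hi0)
    have hj1P : j + 1 ∈ P := not_not.1 hj1
    refine ⟨i, i + 1, j + 1, j, hbd _ _ (rp_cloud_adj hn2 x i) hiP hi1,
      hbd _ _ (rp_cloud_adj hn2 x j).symm hj1P hjP, ?_⟩
    intro h
    rw [Sym2.eq_iff] at h
    simp only [Prod.mk.injEq] at h
    rcases h with ⟨⟨-, h1⟩, ⟨-, h2⟩⟩ | ⟨⟨-, h1⟩, ⟨-, h2⟩⟩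
    · rw [h1] at h2
      exact fin_succ_succ_ne hn j h2
    · exact hjP (h1 ▸ hiP)
  by_cases hSplit : ∃ x : V,
      (∃ i : Fin n, ((x, i) : V × Fin n) ∈ S) ∧ (∃ i : Fin n, ((x, i) : V × Fin n) ∉ S)
  · obtain ⟨x, hx⟩ := hSplit
    by_cases hSplit2 : ∃ y : V, ((∃ i : Fin n, ((y, i) : V × Fin n) ∈ S) ∧
        (∃ i : Fin n, ((y, i) : V × Fin n) ∉ S)) ∧ y ≠ x
    · -- two split clouds: ≥ 4 edges
      obtain ⟨y, hy, hyx⟩ := hSplit2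
      obtain ⟨a, b, c, d, he1, he2, hne12⟩ := hsplit_edges x hx.1 hx.2
      obtain ⟨a', b', c', d', he1', he2', hne12'⟩ := hsplit_edges y hy.1 hy.2
      have h4 := four_le_ncard (Set.toFinite F) he1 he2 he1' he2' hne12
        (cloud_ne_cloud hyx.symm _ _ _ _) (cloud_ne_cloud hyx.symm _ _ _ _)
        (cloud_ne_cloud hyx.symm _ _ _ _) (cloud_ne_cloud hyx.symm _ _ _ _) hne12'
      omega
    · -- unique split cloud x
      have huniq : ∀ y : V, y ≠ x → y ∈ A ∨ y ∈ B := by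
        intro y hyx
        rcases htrich y with h | h | h
        · exact Or.inl h
        · exact Or.inr h
        · exact absurd ⟨y, h, hyx⟩ hSplit2
      have hxA : x ∉ A := by
        intro h
        obtain ⟨i, hi⟩ := hx.2
        exact hi (h i)
      have hxB : x ∉ B := by
        intro h
        obtain ⟨i, hi⟩ := hx.1
        exact (h i) hi
      obtain ⟨a, b, c, d, he1, he2, hne12⟩ := hsplit_edges x hx.1 hx.2
      -- lifted A-B edges
      have hliftAB : ∀ u v : V, u ∈ A → v ∈ B → G.Adj u v →
          ∃ q q' : V × Fin n, q.1 = u ∧ q'.1 = v ∧ s(q, q') ∈ F := by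
        intro u v hu hv hadj
        obtain ⟨i, j, hi, hj, hH⟩ := cross_exists hℓ hreg hadj
        exact ⟨(u, i), (v, j), rfl, rfl, hbd _ _ hH (hu i) (hv j)⟩
      by_cases hAB2 : ∃ u v u' v' : V, (u ∈ A ∧ v ∈ B ∧ G.Adj u v) ∧
          (u' ∈ A ∧ v' ∈ B ∧ G.Adj u' v') ∧ s(u, v) ≠ s(u', v')
      · -- two distinct A-B edges: ≥ 4 edges in F
        obtain ⟨u, v, u', v', ⟨hu, hv, hadj⟩, ⟨hu', hv', hadj'⟩, hsne⟩ := hAB2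
        obtain ⟨q1, q1', hq1, hq1', hF1⟩ := hliftAB u v hu hv hadj
        obtain ⟨q2, q2', hq2, hq2', hF2⟩ := hliftAB u' v' hu' hv' hadj'
        have hq1x : q1.1 ≠ x := by rw [hq1]; intro h; exact hxA (h ▸ hu)
        have hq1'x : q1'.1 ≠ x := by rw [hq1']; intro h; exact hxB (h ▸ hv)
        have hq2x : q2.1 ≠ x := by rw [hq2]; intro h; exact hxA (h ▸ hu')
        have hq2'x : q2'.1 ≠ x := by rw [hq2']; intro h; exact hxB (h ▸ hv')
        have hcross_ne : s(q1, q1') ≠ s(q2, q2') := by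
          intro h
          apply hsne
          have := congrArg (Sym2.map Prod.fst) h
          rw [Sym2.map_pair_eq, Sym2.map_pair_eq, hq1, hq1', hq2, hq2'] at this
          exact this
        have h4 := four_le_ncard (Set.toFinite F) he1 he2 hF1 hF2 hne12
          (cloudx_ne_pq hq1x hq1'x) (cloudx_ne_pq hq2x hq2'x)
          (cloudx_ne_pq hq1x hq1'x) (cloudx_ne_pq hq2x hq2'x) hcross_ne
        omega
      · push_neg at hAB2
        by_cases hAne : A.Nonempty
        case neg =>
          -- A empty : S lives in cloud x
          have h4 := four_le_of_cloud hℓ hreg hn hFnoiso hSne hScl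
            (x := x) ?_ hx.2
          · omega
          · intro p hp
            by_contra hpx
            rcases huniq p.1 hpx with h | h
            · exact hAne ⟨p.1, h⟩
            · exact (h p.2) (by rwa [Prod.mk.eta])
        case pos =>
        by_cases hBne : B.Nonempty
        case neg =>
          -- B empty : Sᶜ lives in cloud x
          have h4 := four_le_of_cloud hℓ hreg hn hFnoiso hScne (closed_compl hScl)
            (x := x) ?_ ?_
          · omega
          · intro p hp
            by_contra hpx
            rcases huniq p.1 hpx with h | h
            · exact hp (by rw [← Prod.mk.eta (p := p)]; exact h p.2)
            · exact hBne ⟨p.1, h⟩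
          · obtain ⟨i, hi⟩ := hx.1
            exact ⟨i, not_not.2 hi⟩
        case pos =>
        obtain ⟨a0, ha0⟩ := hAne
        obtain ⟨b0, hb0⟩ := hBne
        have ha0x : a0 ≠ x := fun h => hxA (h ▸ ha0)
        have hb0x : b0 ≠ x := fun h => hxB (h ▸ hb0)
        -- now the vertex-connectivity contradiction
        by_cases hEAB : ∃ u v : V, u ∈ A ∧ v ∈ B ∧ G.Adj u v
        · obtain ⟨ua, vb, hua, hvb, hadjuv⟩ := hEAB
          have huax : ua ≠ x := fun h => hxA (h ▸ hua)
          have hvbx : vb ≠ x := fun h => hxB (h ▸ hvb)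
          have huv_unique : ∀ u v : V, u ∈ A → v ∈ B → G.Adj u v → u = ua ∧ v = vb := by
            intro u v hu hv hadj
            have heq := hAB2 u v ua vb ⟨hu, hv, hadj⟩ ⟨hua, hvb, hadjuv⟩
            rw [Sym2.eq_iff] at heq
            rcases heq with ⟨h1, h2⟩ | ⟨h1, h2⟩
            · exact ⟨h1, h2⟩
            · exact (hAB vb (h1 ▸ hu) hvb).elim
          by_cases hA2 : ∃ a', a' ∈ A ∧ a' ≠ ua
          · -- cut {x, ua}
            obtain ⟨a', ha', ha'ua⟩ := hA2
            have ha'x : a' ≠ x := fun h => hxA (h ▸ ha')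
            have hcut : vertexConn G ≤ 2 := by
              apply Nat.sInf_le
              refine ⟨{x, ua}, ?_, Or.inl ?_⟩
              · rw [Set.ncard_insert_of_notMem (by simp [huax.symm]) (Set.toFinite _),
                  Set.ncard_singleton]
              · apply not_connected_of_closed
                  (S := {z : ↥(({x, ua} : Set V)ᶜ) | (z : V) ∈ A ∧ (z : V) ≠ ua})
                · exact ⟨⟨a', by simp [ha'x, ha'ua]⟩, ha', ha'ua⟩
                · have hb0ua : b0 ≠ ua := fun h => hAB ua hua (h ▸ hb0)
                  refine ⟨⟨b0, by simp [hb0x, hb0ua]⟩, ?_⟩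
                  simp only [Set.mem_compl_iff, Set.mem_setOf_eq, not_and]
                  intro hb0A
                  exact (hAB b0 hb0A hb0).elim
                · rintro z w hadj ⟨hzA, hzua⟩
                  have hwadj : G.Adj (z : V) (w : V) := hadj
                  have hwx : (w : V) ≠ x := by
                    have := w.2
                    simp only [Set.mem_compl_iff, Set.mem_insert_iff,
                      Set.mem_singleton_iff, not_or] at this
                    exact this.1
                  have hwua : (w : V) ≠ ua := by
                    have := w.2
                    simp only [Set.mem_compl_iff, Set.mem_insert_iff,
                      Set.mem_singleton_iff, not_or] at this
                    exact this.2
                  rcases huniq (w : V) hwx with h | h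
                  · exact ⟨h, hwua⟩
                  · exact absurd ((huv_unique _ _ hzA h hwadj).1) hzua
            omega
          by_cases hB2 : ∃ b', b' ∈ B ∧ b' ≠ vb
          · -- cut {x, vb}
            obtain ⟨b', hb', hb'vb⟩ := hB2
            have hb'x : b' ≠ x := fun h => hxB (h ▸ hb')
            have hcut : vertexConn G ≤ 2 := by
              apply Nat.sInf_le
              refine ⟨{x, vb}, ?_, Or.inl ?_⟩
              · rw [Set.ncard_insert_of_notMem (by simp [hvbx.symm]) (Set.toFinite _),
                  Set.ncard_singleton]
              · apply not_connected_of_closed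
                  (S := {z : ↥(({x, vb} : Set V)ᶜ) | (z : V) ∈ B ∧ (z : V) ≠ vb})
                · exact ⟨⟨b', by simp [hb'x, hb'vb]⟩, hb', hb'vb⟩
                · have ha0vb : a0 ≠ vb := fun h => hAB a0 ha0 (h ▸ hvb)
                  refine ⟨⟨a0, by simp [ha0x, ha0vb]⟩, ?_⟩
                  simp only [Set.mem_compl_iff, Set.mem_setOf_eq, not_and]
                  intro ha0B
                  exact (hAB a0 ha0 ha0B).elim
                · rintro z w hadj ⟨hzB, hzvb⟩
                  have hwadj : G.Adj (z : V) (w : V) := hadj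
                  have hwx : (w : V) ≠ x := by
                    have := w.2
                    simp only [Set.mem_compl_iff, Set.mem_insert_iff,
                      Set.mem_singleton_iff, not_or] at this
                    exact this.1
                  have hwvb : (w : V) ≠ vb := by
                    have := w.2
                    simp only [Set.mem_compl_iff, Set.mem_insert_iff,
                      Set.mem_singleton_iff, not_or] at this
                    exact this.2
                  rcases huniq (w : V) hwx with h | h
                  · exact absurd ((huv_unique _ _ h hzB hwadj.symm).2) hzvb
                  · exact ⟨h, hwvb⟩
            omega
          · -- A = {ua}, B = {vb} : |V| = 3, complement of {x, ua} is {vb}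
            push_neg at hA2 hB2
            have hcut : vertexConn G ≤ 2 := by
              apply Nat.sInf_le
              refine ⟨{x, ua}, ?_, Or.inr ?_⟩
              · rw [Set.ncard_insert_of_notMem (by simp [huax.symm]) (Set.toFinite _),
                  Set.ncard_singleton]
              · have hsub : ({x, ua} : Set V)ᶜ ⊆ {vb} := by
                  intro z hz
                  simp only [Set.mem_compl_iff, Set.mem_insert_iff, Set.mem_singleton_iff,
                    not_or] at hz
                  rcases huniq z hz.1 with h | h
                  · exact absurd (hA2 z h) hz.2
                  · exact hB2 z h
                calc (({x, ua} : Set V)ᶜ).ncard ≤ ({vb} : Set V).ncard :=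
                      Set.ncard_le_ncard hsub (Set.toFinite _)
                  _ = 1 := Set.ncard_singleton _
            omega
        · -- no A-B edges at all: cut {x}
          push_neg at hEAB
          have hcut : vertexConn G ≤ 1 := by
            apply Nat.sInf_le
            refine ⟨{x}, Set.ncard_singleton x, Or.inl ?_⟩
            apply not_connected_of_closed
              (S := {z : ↥(({x} : Set V)ᶜ) | (z : V) ∈ A})
            · exact ⟨⟨a0, by simp [ha0x]⟩, ha0⟩
            · refine ⟨⟨b0, by simp [hb0x]⟩, ?_⟩
              simp only [Set.mem_compl_iff, Set.mem_setOf_eq]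
              intro hb0A
              exact (hAB b0 hb0A hb0).elim
            · rintro z w hadj hzA
              have hwadj : G.Adj (z : V) (w : V) := hadj
              have hwx : (w : V) ≠ x := by
                have h := w.2
                simp only [Set.mem_compl_iff, Set.mem_singleton_iff] at h
                exact h
              rcases huniq (w : V) hwx with h | h
              · exact h
              · exact (hEAB (z : V) (w : V) hzA h hwadj).elim
          omega
  · -- no split cloud
    push_neg at hSplit
    have hfull : ∀ x : V, x ∈ A ∨ x ∈ B := by
      intro x
      rcases htrich x with h | h | h
      · exact Or.inl h
      · exact Or.inr h
      · exact absurd h.2 (by simpa using hSplit x h.1)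
    obtain ⟨p, hp⟩ := hSne
    have hpA : p.1 ∈ A := by
      rcases hfull p.1 with h | h
      · exact h
      · exact absurd (by rwa [Prod.mk.eta] : ((p.1, p.2) : V × Fin n) ∈ S) (h p.2)
    obtain ⟨q, hq⟩ := hScne
    have hqB : q.1 ∈ B := by
      rcases hfull q.1 with h | h
      · exact absurd (by rw [← Prod.mk.eta (p := q)] at hq; exact hq) (not_not.2 (h q.2))
      · exact h
    have hAcne : Aᶜ.Nonempty := ⟨q.1, fun h => hAB q.1 h hqB⟩
    have hkey : edgeBoundary G A ⊆ Sym2.map Prod.fst '' F := by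
      rintro e ⟨hes, u, huA, v, hvAc, rfl⟩
      have hadj : G.Adj u v := (SimpleGraph.mem_edgeSet _).1 hes
      obtain ⟨i, j, hi, hj, hH⟩ := cross_exists hℓ hreg hadj
      have hvB : v ∈ B := (hfull v).resolve_left hvAc
      refine ⟨s((u, i), (v, j)), hbd _ _ hH (huA i) (hvB j), ?_⟩
      rw [Sym2.map_pair_eq]
    have hchain : edgeConn G ≤ F.ncard := by
      calc edgeConn G ≤ (edgeBoundary G A).ncard :=
            edgeConn_le_ncard_edgeBoundary ⟨p.1, hpA⟩ hAcne
        _ ≤ (Sym2.map Prod.fst '' F).ncard := Set.ncard_le_ncard hkey (Set.toFinite _)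
        _ ≤ F.ncard := Set.ncard_image_le (Set.toFinite F)
    omega

end Part7

/-- Corollary 4.8. For any `n`-regular graph `G` with `κ(G) ≥ 3`,
`λ'(G ® C_n) = min {λ(G), 4}`, where `C_n` is the cycle on `n` vertices. -/
theorem restrictedEdgeConn_replacementProduct_cycle
    {V : Type*} [Fintype V] {n : ℕ}
    (G : SimpleGraph V) (ℓ : V → Fin n → V)
    (hℓ : IsRPLabelling G ℓ)
    (h3conn : 3 ≤ vertexConn G)
    (hreg : ∀ x : V, (G.neighborSet x).ncard = n) :
    restrictedEdgeConn (replacementProduct G (SimpleGraph.cycleGraph n) ℓ)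
      = min (edgeConn G) 4 := by
  have hmem : min (edgeConn G) 4 ∈ {k | ∃ F : Set (Sym2 (V × Fin n)),
      IsRestrictedEdgeCut (replacementProduct G (SimpleGraph.cycleGraph n) ℓ) F ∧
      F.ncard = k} := by
    rcases le_or_gt (edgeConn G) 4 with h | h
    · rw [min_eq_left h]
      obtain ⟨F', h1, h2⟩ := edgeConn_mem_restrictedSet hℓ h3conn hreg
      exact ⟨F', h1, h2⟩
    · rw [min_eq_right h.le]
      have hln : edgeConn G ≤ n := edgeConn_le_n h3conn hreg
      obtain ⟨F', h1, h2⟩ := four_mem_restrictedSet hℓ h3conn hreg (by omega)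
      exact ⟨F', h1, h2⟩
  refine le_antisymm (Nat.sInf_le hmem) ?_
  obtain ⟨F, hF, hcard⟩ := Nat.sInf_mem (⟨_, hmem⟩ : Set.Nonempty _)
  rw [restrictedEdgeConn, ← hcard] at *
  exact lower_bound_main hℓ h3conn hreg hF
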